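/- Let β > 3, J ∈ (0,1), and let x_l ∈ (1/3, 1/2) satisfy ξ(x_l) = β. Suppose P, Q ∈ (0,1) with P < Q satisfy P − (1/β) log P = Q − (1/β) log Q and Q = (1+J)/(β(1−J)). Then J > (β − 1/x_l)/(β + 1/x_l) if and only if P + 2Q > 1; and J = (β − 1/x_l)/(β + 1/x_l) if and only if P + 2Q = 1. -/

import Mathlib

open Real Set

/-- ξ(x) = (1/(1−3x)) log((1−2x)/x), continuously extended by ξ(1/3) = 3. -/
noncomputable def xi (x : ℝ) : ℝ :=
  if x = 1 / 3 then 3 else (1 / (1 - 3 * x)) * Real.log ((1 - 2 * x) / x)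

noncomputable def Fxi (x : ℝ) : ℝ := (Real.log x - Real.log (1 - 2*x)) / (3*x - 1)

lemma key_ineq {s : ℝ} (hs : 1 < s) : 3 * Real.log s < 2 * s - 1 - 1 / s := by
  set u : ℝ := s ^ ((1:ℝ)/3) with hu
  have hs0 : (0:ℝ) < s := by linarith
  have hu1 : 1 < u := by
    rw [hu, Real.one_lt_rpow_iff_of_pos hs0]
    exact Or.inl ⟨hs, by norm_num⟩
  have hu0 : (0:ℝ) < u := by linarith
  have hcube : u ^ (3:ℕ) = s := by
    rw [hu, ← Real.rpow_natCast (s ^ ((1:ℝ)/3)) 3, ← Real.rpow_mul hs0.le]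
    norm_num
  have hlog : Real.log s = 3 * Real.log u := by
    rw [hu, Real.log_rpow hs0]; ring
  have hlogu : Real.log u < u - 1 := Real.log_lt_sub_one_of_pos hu0 (by linarith)
  have hpoly : 9 * (u - 1) ≤ 2 * u ^ (3:ℕ) - 1 - 1 / u ^ (3:ℕ) := by
    rw [← sub_nonneg]
    have key : 2 * u ^ (3:ℕ) - 1 - 1 / u ^ (3:ℕ) - 9 * (u - 1)
        = (u - 1) ^ 3 * (2*u^3 + 6*u^2 + 3*u + 1) / u ^ 3 := by
      field_simp
      ring
    rw [key]
    apply div_nonneg _ (by positivity)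
    apply mul_nonneg (pow_nonneg (by linarith) 3) (by nlinarith)
  rw [hlog, ← hcube]
  linarith

lemma f_anti {β a b : ℝ} (hβ : 0 < β) (ha : 0 < a) (hab : a < b) (hb : b ≤ 1/β) :
    b - (1/β) * Real.log b < a - (1/β) * Real.log a := by
  have hb0 : 0 < b := lt_trans ha hab
  have h1 : Real.log (a/b) < a/b - 1 :=
    Real.log_lt_sub_one_of_pos (by positivity) (by
      intro h
      have : a = b := by field_simp at h; linarith
      linarith)
  rw [Real.log_div ha.ne' hb0.ne'] at h1
  have h2 : (b - a)/b < Real.log b - Real.log a := by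
    have : a/b - 1 = -((b-a)/b) := by field_simp; ring
    nlinarith [h1]
  have hβb : β * b ≤ 1 := by
    rw [le_div_iff₀ hβ] at hb; linarith
  have h3 : b - a ≤ (1/β) * ((b - a)/b) := by
    rw [← sub_nonneg]
    have : (1/β) * ((b - a)/b) - (b - a) = (b - a) * (1 - β*b) / (β * b) := by
      field_simp
    rw [this]
    apply div_nonneg (mul_nonneg (by linarith) (by linarith)) (by positivity)
  nlinarith [mul_lt_mul_of_pos_left h2 (show (0:ℝ) < 1/β by positivity)]

lemma f_mono {β a b : ℝ} (hβ : 0 < β) (ha : 1/β ≤ a) (hab : a < b) :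
    a - (1/β) * Real.log a < b - (1/β) * Real.log b := by
  have ha0 : 0 < a := lt_of_lt_of_le (by positivity) ha
  have hb0 : 0 < b := lt_trans ha0 hab
  have h1 : Real.log (b/a) < b/a - 1 :=
    Real.log_lt_sub_one_of_pos (by positivity) (by
      intro h
      have : b = a := by field_simp at h; linarith
      linarith)
  rw [Real.log_div hb0.ne' ha0.ne'] at h1
  have h2 : Real.log b - Real.log a < (b - a)/a := by
    have : b/a - 1 = (b-a)/a := by field_simp
    linarith [this ▸ h1]
  have hβa : 1 ≤ β * a := by
    rw [div_le_iff₀ hβ] at ha; linarith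
  have h3 : (1/β) * ((b - a)/a) ≤ b - a := by
    rw [← sub_nonneg]
    have : (b - a) - (1/β) * ((b - a)/a) = (b - a) * (β*a - 1) / (β * a) := by
      field_simp
    rw [this]
    apply div_nonneg (mul_nonneg (by linarith) (by linarith)) (by positivity)
  nlinarith [mul_lt_mul_of_pos_left h2 (show (0:ℝ) < 1/β by positivity)]

lemma hasDerivAt_Fxi {x : ℝ} (h1 : 1/3 < x) (h2 : x < 1/2) :
    HasDerivAt Fxi
      (((x⁻¹ + 2 * (1-2*x)⁻¹) * (3*x-1) - (Real.log x - Real.log (1-2*x)) * 3) / (3*x-1)^2) x := by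
  have hx0 : (0:ℝ) < x := by linarith
  have h2x : (0:ℝ) < 1 - 2*x := by linarith
  have h3x : (3*x - 1) ≠ 0 := by intro h; nlinarith [h]
  have hinner : HasDerivAt (fun y : ℝ => 1 - 2*y) (-2) x := by
    simpa using ((hasDerivAt_id x).const_mul (2:ℝ)).const_sub 1
  have hlog2 : HasDerivAt (fun y : ℝ => Real.log (1 - 2*y)) ((1-2*x)⁻¹ * (-2)) x :=
    by have := (Real.hasDerivAt_log h2x.ne').comp x hinner; exact this
  have hL : HasDerivAt (fun y : ℝ => Real.log y - Real.log (1 - 2*y))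
      (x⁻¹ + 2 * (1-2*x)⁻¹) x := by
    have := (Real.hasDerivAt_log hx0.ne').sub hlog2
    exact this.congr_deriv (by ring)
  have hD : HasDerivAt (fun y : ℝ => 3*y - 1) 3 x := by
    simpa using ((hasDerivAt_id x).const_mul (3:ℝ)).sub_const 1
  exact hL.div hD h3x

lemma Fxi_strictMono : StrictMonoOn Fxi (Ioo (1/3 : ℝ) (1/2)) := by
  apply strictMonoOn_of_deriv_pos (convex_Ioo _ _)
  · intro x hx
    exact (hasDerivAt_Fxi hx.1 hx.2).continuousAt.continuousWithinAt
  · intro x hx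
    rw [interior_Ioo] at hx
    obtain ⟨h1, h2⟩ := hx
    rw [(hasDerivAt_Fxi h1 h2).deriv]
    have hx0 : (0:ℝ) < x := by linarith
    have h2x : (0:ℝ) < 1 - 2*x := by linarith
    have h3x : (0:ℝ) < 3*x - 1 := by linarith
    apply div_pos _ (by positivity)
    have hs1 : 1 < x / (1 - 2*x) := by
      rw [lt_div_iff₀ h2x]; linarith
    have hkey := key_ineq hs1
    have hlogs : Real.log (x / (1 - 2*x)) = Real.log x - Real.log (1 - 2*x) :=
      Real.log_div hx0.ne' h2x.ne'
    rw [hlogs] at hkey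
    have halg : (x⁻¹ + 2 * (1-2*x)⁻¹) * (3*x-1)
        = 2 * (x / (1 - 2*x)) - 1 - 1 / (x / (1 - 2*x)) := by
      have h2x' : (1 - x*2) ≠ 0 := by linarith
      field_simp
      ring
    rw [halg]
    linarith

/-- for β > 3, J ∈ (0,1), x_l ∈ (1/3,1/2) with ξ(x_l) = β, and
P < Q in (0,1) with P − (1/β) log P = Q − (1/β) log Q and Q = (1+J)/(β(1−J)):
J > (β − 1/x_l)/(β + 1/x_l) iff P + 2Q > 1, and J = (β − 1/x_l)/(β + 1/x_l) iff
P + 2Q = 1. -/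
theorem stmt_14 (β J : ℝ) (hβ : 3 < β) (hJ : J ∈ Ioo (0 : ℝ) 1)
    (xl : ℝ) (hxl : xl ∈ Ioo (1 / 3 : ℝ) (1 / 2)) (hξ : xi xl = β)
    (P Q : ℝ) (hP : P ∈ Ioo (0 : ℝ) 1) (hQ : Q ∈ Ioo (0 : ℝ) 1) (hPQ : P < Q)
    (heq : P - (1 / β) * Real.log P = Q - (1 / β) * Real.log Q)
    (hQval : Q = (1 + J) / (β * (1 - J))) :
    ((β - 1 / xl) / (β + 1 / xl) < J ↔ 1 < P + 2 * Q) ∧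
    (J = (β - 1 / xl) / (β + 1 / xl) ↔ P + 2 * Q = 1) := by
  obtain ⟨hxl13, hxl12⟩ := hxl
  obtain ⟨hP0, hP1⟩ := hP
  obtain ⟨hQ0, hQ1⟩ := hQ
  obtain ⟨hJ0, hJ1⟩ := hJ
  have hβ0 : (0:ℝ) < β := by linarith
  have hxl0 : (0:ℝ) < xl := by linarith
  have h2xl0 : (0:ℝ) < 1 - 2*xl := by linarith
  have h3xlne : (1 - 3*xl) ≠ 0 := by intro h; nlinarith
  have hβinv : 1/β < 1/3 := by
    rw [div_lt_div_iff₀ hβ0 (by norm_num)]; linarith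
  -- extract the log identity from hξ
  rw [xi, if_neg (by intro h; rw [h] at hxl13; norm_num at hxl13)] at hξ
  rw [Real.log_div h2xl0.ne' hxl0.ne'] at hξ
  have hlog : Real.log (1 - 2*xl) - Real.log xl = β * (1 - 3*xl) := by
    field_simp at hξ
    ring_nf at hξ ⊢
    linarith [hξ]
  -- f(xl) = f(1-2xl)
  have hfxl : xl - (1/β) * Real.log xl = (1 - 2*xl) - (1/β) * Real.log (1 - 2*xl) := by
    have h : (1/β) * (Real.log (1 - 2*xl) - Real.log xl) = 1 - 3*xl := by
      rw [hlog]; field_simp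
    linarith
  -- branches
  have hPβ : P < 1/β := by
    by_contra h
    push_neg at h
    exact (f_mono hβ0 h hPQ).ne heq
  have hQβ : 1/β < Q := by
    by_contra h
    push_neg at h
    exact (f_anti hβ0 hP0 hPQ h).ne heq.symm
  have h2xlβ : 1 - 2*xl < 1/β := by
    by_contra h
    push_neg at h
    exact (f_mono hβ0 h (by linarith : 1 - 2*xl < xl)).ne' hfxl
  -- Fxi xl = β
  have h3xl : (0:ℝ) < 3*xl - 1 := by linarith
  have hFxl : Fxi xl = β := by
    rw [Fxi, div_eq_iff (by linarith : (3*xl - 1) ≠ 0)]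
    linear_combination -hlog
  -- key trichotomy facts
  have key_eq : Q = xl → P + 2*Q = 1 := by
    intro h
    have hfP : P - (1/β) * Real.log P = (1 - 2*xl) - (1/β) * Real.log (1 - 2*xl) := by
      rw [heq, h]; exact hfxl
    rcases lt_trichotomy P (1 - 2*xl) with hc | hc | hc
    · exact absurd hfP (f_anti hβ0 hP0 hc h2xlβ.le).ne'
    · rw [h]; linarith
    · exact absurd hfP (f_anti hβ0 h2xl0 hc hPβ.le).ne
  have key_gt : xl < Q → 1 < P + 2*Q := by
    intro h
    by_cases hQhalf : 1/2 ≤ Q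
    · linarith
    push_neg at hQhalf
    have hQmem : Q ∈ Ioo (1/3 : ℝ) (1/2) := ⟨by linarith, hQhalf⟩
    have h2Q0 : (0:ℝ) < 1 - 2*Q := by linarith
    have h2Qβ : 1 - 2*Q < 1/β := by linarith
    have h3Q : (0:ℝ) < 3*Q - 1 := by linarith
    have hF : β < Fxi Q := by
      rw [← hFxl]; exact Fxi_strictMono ⟨hxl13, hxl12⟩ hQmem h
    have hFQ : Real.log Q - Real.log (1 - 2*Q) = (3*Q - 1) * Fxi Q := by
      rw [Fxi, mul_div_assoc', mul_div_cancel_left₀ _ h3Q.ne']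
    have hfQ : Q - (1/β) * Real.log Q < (1 - 2*Q) - (1/β) * Real.log (1 - 2*Q) := by
      have h1 : (3*Q - 1) * β < (3*Q - 1) * Fxi Q := by
        exact mul_lt_mul_of_pos_left hF h3Q
      have h2 : (1/β) * ((3*Q - 1)*β) = 3*Q - 1 := by field_simp
      have h3 : (1/β) * ((3*Q - 1)*β) < (1/β) * (Real.log Q - Real.log (1 - 2*Q)) := by
        rw [hFQ]
        exact mul_lt_mul_of_pos_left h1 (by positivity)
      have h4 : (1/β) * (Real.log Q - Real.log (1 - 2*Q))
          = (1/β) * Real.log Q - (1/β) * Real.log (1 - 2*Q) := by ring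
      rw [h4] at h3
      linarith [h2 ▸ h3]
    -- so f P = f Q < f (1-2Q); conclude 1-2Q < P
    rcases lt_trichotomy P (1 - 2*Q) with hc | hc | hc
    · have := f_anti hβ0 hP0 hc h2Qβ.le
      linarith [heq ▸ this]
    · rw [← hc] at hfQ; linarith [heq ▸ hfQ]
    · linarith
  have key_lt : Q < xl → P + 2*Q < 1 := by
    intro h
    by_cases hQ3 : Q ≤ 1/3
    · linarith
    push_neg at hQ3
    have hQmem : Q ∈ Ioo (1/3 : ℝ) (1/2) := ⟨hQ3, by linarith⟩
    have h2Q0 : (0:ℝ) < 1 - 2*Q := by linarith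
    have h3Q : (0:ℝ) < 3*Q - 1 := by linarith
    have hF : Fxi Q < β := by
      rw [← hFxl]; exact Fxi_strictMono hQmem ⟨hxl13, hxl12⟩ h
    have hFQ : Real.log Q - Real.log (1 - 2*Q) = (3*Q - 1) * Fxi Q := by
      rw [Fxi, mul_div_assoc', mul_div_cancel_left₀ _ h3Q.ne']
    have hfQ : (1 - 2*Q) - (1/β) * Real.log (1 - 2*Q) < Q - (1/β) * Real.log Q := by
      have h1 : (3*Q - 1) * Fxi Q < (3*Q - 1) * β := mul_lt_mul_of_pos_left hF h3Q
      have h2 : (1/β) * ((3*Q - 1)*β) = 3*Q - 1 := by field_simp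
      have h3 : (1/β) * (Real.log Q - Real.log (1 - 2*Q)) < (1/β) * ((3*Q - 1)*β) := by
        rw [hFQ]
        exact mul_lt_mul_of_pos_left h1 (by positivity)
      have h4 : (1/β) * (Real.log Q - Real.log (1 - 2*Q))
          = (1/β) * Real.log Q - (1/β) * Real.log (1 - 2*Q) := by ring
      rw [h4] at h3
      linarith [h2 ▸ h3]
    -- f(1-2Q) < f Q = f P
    by_cases hc0 : 1/β ≤ 1 - 2*Q
    · linarith
    push_neg at hc0
    rcases lt_trichotomy P (1 - 2*Q) with hc | hc | hc
    · linarith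
    · rw [← hc] at hfQ; linarith [heq ▸ hfQ]
    · have := f_anti hβ0 h2Q0 hc hPβ.le
      linarith [heq ▸ this]
  -- algebra for J vs ψ
  have hd2 : (0:ℝ) < β*xl + 1 := by positivity
  have hden : (0:ℝ) < β + 1/xl := by positivity
  have hpsi : (β - 1/xl)/(β + 1/xl) = (β*xl - 1)/(β*xl + 1) := by
    rw [div_eq_div_iff hden.ne' hd2.ne']
    field_simp
  have h1J : (0:ℝ) < 1 - J := by linarith
  have hQJ : β*Q - β*Q*J = 1 + J := by
    have hne : β * (1 - J) ≠ 0 := by positivity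
    rw [eq_div_iff hne] at hQval
    linear_combination hQval
  have hA : (β*xl - 1)/(β*xl + 1) < J ↔ xl < Q := by
    rw [div_lt_iff₀ hd2]
    constructor
    · intro h
      by_contra h'
      push_neg at h'
      have hprod : 0 ≤ β * (xl - Q) * (1 - J) :=
        mul_nonneg (mul_nonneg hβ0.le (by linarith)) (by linarith)
      have hexp : β * (xl - Q) * (1 - J) = (β*xl - β*xl*J) - (β*Q - β*Q*J) := by ring
      rw [hexp] at hprod
      linarith
    · intro h
      have hprod : 0 < β * (Q - xl) * (1 - J) :=
        mul_pos (mul_pos hβ0 (by linarith)) (by linarith)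
      have hexp : β * (Q - xl) * (1 - J) = (β*Q - β*Q*J) - (β*xl - β*xl*J) := by ring
      rw [hexp] at hprod
      linarith
  have hB : J = (β*xl - 1)/(β*xl + 1) ↔ Q = xl := by
    rw [eq_div_iff hd2.ne']
    constructor
    · intro h
      have h0 : β*(1 - J)*(Q - xl) = 0 := by linear_combination hQJ + h
      rcases mul_eq_zero.mp h0 with h1 | h1
      · exact absurd h1 (by positivity)
      · linarith [h1]
    · intro h
      rw [h] at hQJ
      linear_combination -hQJ
  constructor
  · rw [hpsi, hA]
    constructor
    · exact key_gt
    · intro h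
      rcases lt_trichotomy Q xl with hc | hc | hc
      · linarith [key_lt hc]
      · linarith [key_eq hc]
      · exact hc
  · rw [hpsi, hB]
    constructor
    · exact key_eq
    · intro h
      rcases lt_trichotomy Q xl with hc | hc | hc
      · linarith [key_lt hc]
      · exact hc
      · linarith [key_gt hc]
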